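/- The discrete-time primal value equals the Lebesgue measure (volume) of the maximum controlled invariant set: p* = λ(X_I). Moreover the supremum is attained by the restriction of the Lebesgue measure to X_I: there exist finite nonnegative Borel measures μ and μ̂₀ such that the triple (λ|_{X_I}, μ, μ̂₀) is feasible for the discrete-time primal LP. -/

import Mathlib

open MeasureTheory
open scoped ENNReal

/-- The (topological) support of a Borel measure. -/
def msupport {α : Type*} [TopologicalSpace α] [MeasurableSpace α] (μ : Measure α) : Set α :=
  {x | ∀ s : Set α, IsOpen s → x ∈ s → 0 < μ s}

/-- The maximum controlled invariant set of the discrete-time system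
`x_{t+1} = f (x_t, u_t)` with state constraint set `X` and input constraint set `U`. -/
def mciD {n m : ℕ} (X : Set (EuclideanSpace ℝ (Fin n))) (U : Set (EuclideanSpace ℝ (Fin m)))
    (f : EuclideanSpace ℝ (Fin n) → EuclideanSpace ℝ (Fin m) → EuclideanSpace ℝ (Fin n)) :
    Set (EuclideanSpace ℝ (Fin n)) :=
  {x0 | ∃ (x : ℕ → EuclideanSpace ℝ (Fin n)) (u : ℕ → EuclideanSpace ℝ (Fin m)),
    x 0 = x0 ∧ (∀ t, x (t + 1) = f (x t) (u t)) ∧ (∀ t, x t ∈ X) ∧ (∀ t, u t ∈ U)}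

/-- The discrete-time discounted Liouville equation for the pair `(μ₀, μ)`. -/
def LiouvilleD {n m : ℕ}
    (f : EuclideanSpace ℝ (Fin n) → EuclideanSpace ℝ (Fin m) → EuclideanSpace ℝ (Fin n))
    (α : ℝ) (μ₀ : Measure (EuclideanSpace ℝ (Fin n)))
    (μ : Measure (EuclideanSpace ℝ (Fin n) × EuclideanSpace ℝ (Fin m))) : Prop :=
  ∀ v : EuclideanSpace ℝ (Fin n) → ℝ, Continuous v →
    ∫ p, v p.1 ∂μ = ∫ x, v x ∂μ₀ + α * ∫ p, v (f p.1 p.2) ∂μ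

/-- Feasibility of a triple `(μ₀, μ, μ̂₀)` for the discrete-time primal LP:
all three are finite nonnegative Borel measures, `μ₀` and `μ̂₀` are supported in `X`,
`μ` is supported in `X × U`, `(μ₀, μ)` satisfies the discounted Liouville equation,
and `μ₀ + μ̂₀` equals the restriction of the Lebesgue measure to `X`. -/
def FeasibleD {n m : ℕ} (X : Set (EuclideanSpace ℝ (Fin n)))
    (U : Set (EuclideanSpace ℝ (Fin m)))
    (f : EuclideanSpace ℝ (Fin n) → EuclideanSpace ℝ (Fin m) → EuclideanSpace ℝ (Fin n))
    (α : ℝ) (μ₀ : Measure (EuclideanSpace ℝ (Fin n)))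
    (μ : Measure (EuclideanSpace ℝ (Fin n) × EuclideanSpace ℝ (Fin m)))
    (μh : Measure (EuclideanSpace ℝ (Fin n))) : Prop :=
  IsFiniteMeasure μ₀ ∧ IsFiniteMeasure μ ∧ IsFiniteMeasure μh ∧
  msupport μ₀ ⊆ X ∧ msupport μh ⊆ X ∧ msupport μ ⊆ X ×ˢ U ∧
  LiouvilleD f α μ₀ μ ∧ μ₀ + μh = volume.restrict X


open Metric Filter
open scoped Topology

set_option linter.unusedSectionVars false
set_option linter.unusedVariables false

lemma msupport_subset {α : Type*} [TopologicalSpace α] [MeasurableSpace α]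
    {μ : Measure α} {C : Set α} (hC : IsClosed C) (h : μ Cᶜ = 0) : msupport μ ⊆ C := by
  intro x hx
  by_contra hxC
  have := hx Cᶜ hC.isOpen_compl hxC
  simp [h] at this

lemma isClosed_msupport {α : Type*} [TopologicalSpace α] [MeasurableSpace α] (μ : Measure α) :
    IsClosed (msupport μ) := by
  rw [← isOpen_compl_iff]
  rw [isOpen_iff_mem_nhds]
  intro x hx
  simp only [msupport, Set.mem_compl_iff, Set.mem_setOf_eq, not_forall] at hx
  obtain ⟨s, hs, hxs, hμs⟩ := hx
  refine Filter.mem_of_superset (hs.mem_nhds hxs) ?_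
  intro y hy
  simp only [msupport, Set.mem_compl_iff, Set.mem_setOf_eq, not_forall]
  exact ⟨s, hs, hy, hμs⟩

lemma measure_compl_msupport {α : Type*} [TopologicalSpace α] [MeasurableSpace α]
    [SecondCountableTopology α] [OpensMeasurableSpace α] (μ : Measure α) :
    μ (msupport μ)ᶜ = 0 := by
  classical
  set B := {b ∈ TopologicalSpace.countableBasis α | μ b = 0} with hB
  have hBc : B.Countable := (TopologicalSpace.countable_countableBasis α).mono (Set.sep_subset _ _)
  have hnull : μ (⋃₀ B) = 0 :=
    (measure_sUnion_null_iff hBc).2 fun s hs => hs.2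
  refine measure_mono_null ?_ hnull
  intro x hx
  simp only [msupport, Set.mem_compl_iff, Set.mem_setOf_eq, not_forall] at hx
  obtain ⟨s, hs, hxs, hμs⟩ := hx
  have hμs0 : μ s = 0 := by
    by_contra h0
    exact hμs (pos_iff_ne_zero.2 h0)
  obtain ⟨b, hb, hxb, hbs⟩ :=
    (TopologicalSpace.isBasis_countableBasis α).exists_subset_of_mem_open hxs hs
  exact ⟨b, ⟨hb, le_antisymm (le_trans (measure_mono hbs) hμs0.le) (by positivity)⟩, hxb⟩

lemma integrable_of_bounded_cont {β : Type*} [MeasurableSpace β] [MetricSpace β]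
    [OpensMeasurableSpace β] {ν : Measure β} [IsFiniteMeasure ν] {v : β → ℝ}
    (hc : Continuous v) (h0 : ∀ x, 0 ≤ v x) (h1 : ∀ x, v x ≤ 1) : Integrable v ν := by
  refine ⟨hc.aestronglyMeasurable, HasFiniteIntegral.of_bounded (C := 1) ?_⟩
  filter_upwards with x
  rw [Real.norm_eq_abs, abs_of_nonneg (h0 x)]
  exact h1 x

/-- If integrals of `[0,1]`-valued continuous functions compare, then measures of open sets
compare. -/
lemma measure_le_measure_of_integral_le {β : Type*} [MeasurableSpace β] [MetricSpace β]
    [OpensMeasurableSpace β]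
    {ν₁ ν₂ : Measure β} [IsFiniteMeasure ν₁] [IsFiniteMeasure ν₂]
    (h : ∀ v : β → ℝ, Continuous v → (∀ x, 0 ≤ v x) → (∀ x, v x ≤ 1) →
      ∫ x, v x ∂ν₁ ≤ ∫ x, v x ∂ν₂)
    {s : Set β} (hs : IsOpen s) : ν₁ s ≤ ν₂ s := by
  classical
  rcases Set.eq_empty_or_nonempty sᶜ with hsc | hsc
  · -- s = univ
    have hsu : s = Set.univ := Set.compl_empty_iff.mp hsc
    subst hsu
    have h1 := h (fun _ => 1) continuous_const (fun _ => zero_le_one) (fun _ => le_refl 1)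
    simp only [integral_const, smul_eq_mul, mul_one] at h1
    rw [← ENNReal.ofReal_toReal (measure_ne_top ν₁ Set.univ),
      ← ENNReal.ofReal_toReal (measure_ne_top ν₂ Set.univ)]
    exact ENNReal.ofReal_le_ofReal h1
  -- main case : sᶜ nonempty closed
  have hscc : IsClosed sᶜ := hs.isClosed_compl
  set F : ℕ → Set β := fun j => {x | 1 / (j + 1 : ℝ) ≤ infDist x sᶜ} with hF
  set v : ℕ → β → ℝ := fun j x => min 1 ((j + 1 : ℝ) * infDist x sᶜ) with hv
  have hvc : ∀ j, Continuous (v j) :=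
    fun j => continuous_const.min (continuous_const.mul (continuous_infDist_pt _))
  have hv0 : ∀ j x, 0 ≤ v j x := fun j x =>
    le_min zero_le_one (mul_nonneg (by positivity) infDist_nonneg)
  have hv1 : ∀ j x, v j x ≤ 1 := fun j x => min_le_left _ _
  -- each F j is closed
  have hFclosed : ∀ j, IsClosed (F j) :=
    fun j => isClosed_le continuous_const (continuous_infDist_pt _)
  -- indicator bounds
  have key : ∀ j, ν₁ (F j) ≤ ν₂ s := by
    intro j
    have hint1 : Integrable (v j) ν₁ := integrable_of_bounded_cont (hvc j) (hv0 j) (hv1 j)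
    have e1 : ν₁ (F j) ≤ ∫⁻ x, ENNReal.ofReal (v j x) ∂ν₁ := by
      have : ν₁ (F j) = ∫⁻ x, (F j).indicator (fun _ => (1 : ℝ≥0∞)) x ∂ν₁ := by
        rw [lintegral_indicator (hFclosed j).measurableSet]; simp
      rw [this]
      refine lintegral_mono fun x => ?_
      by_cases hx : x ∈ F j
      · simp only [Set.indicator_of_mem hx]
        have : v j x = 1 := by
          have : (1 : ℝ) ≤ (j + 1 : ℝ) * infDist x sᶜ := by
            have hxF : 1 / (j + 1 : ℝ) ≤ infDist x sᶜ := hx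
            rw [div_le_iff₀ (by positivity)] at hxF
            linarith [hxF]
          simp [hv, min_eq_left, this]
        rw [this]; simp
      · simp [Set.indicator_of_notMem hx]
    have e2 : ∫⁻ x, ENNReal.ofReal (v j x) ∂ν₁ = ENNReal.ofReal (∫ x, v j x ∂ν₁) :=
      (ofReal_integral_eq_lintegral_ofReal hint1 (Filter.Eventually.of_forall (hv0 j))).symm
    have hint2 : Integrable (v j) ν₂ := integrable_of_bounded_cont (hvc j) (hv0 j) (hv1 j)
    have e3 : ENNReal.ofReal (∫ x, v j x ∂ν₂) = ∫⁻ x, ENNReal.ofReal (v j x) ∂ν₂ :=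
      ofReal_integral_eq_lintegral_ofReal hint2 (Filter.Eventually.of_forall (hv0 j))
    have e4 : ∫⁻ x, ENNReal.ofReal (v j x) ∂ν₂ ≤ ν₂ s := by
      have : ∀ x, ENNReal.ofReal (v j x) ≤ s.indicator (fun _ => (1 : ℝ≥0∞)) x := by
        intro x
        by_cases hx : x ∈ s
        · simp only [Set.indicator_of_mem hx]
          calc ENNReal.ofReal (v j x) ≤ ENNReal.ofReal 1 := ENNReal.ofReal_le_ofReal (hv1 j x)
          _ = 1 := by simp
        · have : infDist x sᶜ = 0 := infDist_zero_of_mem hx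
          simp [hv, this, Set.indicator_of_notMem hx]
        
      calc ∫⁻ x, ENNReal.ofReal (v j x) ∂ν₂ ≤ ∫⁻ x, s.indicator (fun _ => (1:ℝ≥0∞)) x ∂ν₂ :=
            lintegral_mono this
      _ = ν₂ s := by rw [lintegral_indicator hs.measurableSet]; simp
    calc ν₁ (F j) ≤ ∫⁻ x, ENNReal.ofReal (v j x) ∂ν₁ := e1
    _ = ENNReal.ofReal (∫ x, v j x ∂ν₁) := e2
    _ ≤ ENNReal.ofReal (∫ x, v j x ∂ν₂) :=
        ENNReal.ofReal_le_ofReal (h (v j) (hvc j) (hv0 j) (hv1 j))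
    _ = ∫⁻ x, ENNReal.ofReal (v j x) ∂ν₂ := e3
    _ ≤ ν₂ s := e4
  -- s = ⋃ j, F j
  have hsU : s = ⋃ j, F j := by
    ext x
    constructor
    · intro hx
      have hx0 : infDist x sᶜ ≠ 0 := by
        intro h0
        exact (by simpa using hx :  x ∉ sᶜ) (((hscc.mem_iff_infDist_zero hsc)).2 h0)
      have hpos : 0 < infDist x sᶜ := lt_of_le_of_ne infDist_nonneg (Ne.symm hx0)
      obtain ⟨j, hj⟩ := exists_nat_one_div_lt hpos
      exact Set.mem_iUnion.2 ⟨j, le_of_lt hj⟩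
    · intro hx
      obtain ⟨j, hj⟩ := Set.mem_iUnion.1 hx
      by_contra hxs
      have : infDist x sᶜ = 0 := infDist_zero_of_mem hxs
      have hj' : 1 / (j + 1 : ℝ) ≤ 0 := by rw [← this]; exact hj
      have : (0:ℝ) < 1 / (j+1:ℝ) := by positivity
      linarith
  have hmono : Monotone F := by
    intro i j hij x hx
    simp only [hF, Set.mem_setOf_eq] at hx ⊢
    refine le_trans ?_ hx
    have h1 : (i + 1 : ℝ) ≤ (j + 1 : ℝ) := by exact_mod_cast Nat.succ_le_succ hij
    exact one_div_le_one_div_of_le (by positivity) h1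
  calc ν₁ s = ⨆ j, ν₁ (F j) := by rw [hsU, hmono.directed_le.measure_iUnion]
  _ ≤ ν₂ s := iSup_le key

section Selection

variable {E F : Type*} [MeasurableSpace E] [MetricSpace E] [OpensMeasurableSpace E]
  [MeasurableSpace F] [MetricSpace F] [BorelSpace F]
  [CompleteSpace F] [TopologicalSpace.SeparableSpace F] [Nonempty F]

/-- Measurability of the function selecting the least index satisfying a
countable family of measurable predicates. -/
lemma measurable_sInf_index {P : ℕ → E → Prop} (hP : ∀ i, MeasurableSet {x | P i x}) :
    Measurable fun x => sInf {i | P i x} := by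
  apply measurable_to_countable'
  intro i
  have : (fun x => sInf {i | P i x}) ⁻¹' {i} =
      ({x | P i x} ∩ ⋂ j ∈ Set.Iio i, {x | ¬ P j x}) ∪
        ({x | i = 0} ∩ ⋂ j, {x | ¬ P j x}) := by
    ext x
    simp only [Set.mem_preimage, Set.mem_singleton_iff, Set.mem_union, Set.mem_inter_iff,
      Set.mem_iInter, Set.mem_setOf_eq, Set.mem_Iio]
    constructor
    · intro hx
      by_cases hne : {j | P j x}.Nonempty
      · left
        constructor
        · have := Nat.sInf_mem hne
          rwa [hx] at this
        · intro j hj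
          have : j < sInf {j | P j x} := by rwa [hx]
          exact Nat.notMem_of_lt_sInf this
      · right
        rw [Set.not_nonempty_iff_eq_empty] at hne
        refine ⟨by rw [← hx, hne, Nat.sInf_empty], fun j hj => ?_⟩
        have : j ∈ {j | P j x} := hj
        rw [hne] at this
        exact this
    · rintro (⟨hPi, hlt⟩ | ⟨hi0, hall⟩)
      · refine le_antisymm (Nat.sInf_le hPi) ?_
        by_contra hcon
        push_neg at hcon
        have hne : {j | P j x}.Nonempty := ⟨i, hPi⟩
        exact hlt _ hcon (Nat.sInf_mem hne)
      · have : {j | P j x} = ∅ := by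
          ext j; simp only [Set.mem_setOf_eq, Set.mem_empty_iff_false, iff_false]; exact hall j
        rw [this, Nat.sInf_empty, hi0]
  rw [this]
  refine MeasurableSet.union ((hP i).inter ?_) (MeasurableSet.inter ?_ ?_)
  · exact MeasurableSet.biInter (Set.to_countable _) fun j _ => (hP j).compl
  · by_cases h : i = 0 <;> simp [h]
  · exact MeasurableSet.iInter fun j => (hP j).compl

/-- Measurable selection from a compact set in a product: there is a measurable map `g`
such that `(x, g x) ∈ K` whenever `x` is in the projection of `K`. -/
lemma exists_measurable_selection {K : Set (E × F)} (hK : IsCompact K) :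
    ∃ g : E → F, Measurable g ∧ ∀ x ∈ Prod.fst '' K, (x, g x) ∈ K := by
  classical
  set d : ℕ → F := TopologicalSpace.denseSeq F with hd_def
  have hd : DenseRange d := TopologicalSpace.denseRange_denseSeq F
  set S : Set E := Prod.fst '' K with hS_def
  have hScompact : IsCompact S := hK.image continuous_fst
  have hSmeas : MeasurableSet S := hScompact.isClosed.measurableSet
  -- the sets E i r
  set Er : ℕ → ℝ → Set E := fun i r =>
    ⋃ j : ℕ, Prod.fst '' (K ∩ {p | dist p.2 (d i) ≤ r - 1 / (j + 1)}) with hEr_def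
  have hEr_meas : ∀ i r, MeasurableSet (Er i r) := by
    intro i r
    refine MeasurableSet.iUnion fun j => ?_
    have hcl : IsClosed {p : E × F | dist p.2 (d i) ≤ r - 1 / (j + 1)} :=
      isClosed_le (continuous_snd.dist continuous_const) continuous_const
    exact (((hK.inter_right hcl).image continuous_fst).isClosed).measurableSet
  have hEr_mem : ∀ (i : ℕ) (r : ℝ) (x : E),
      x ∈ Er i r ↔ ∃ u, (x, u) ∈ K ∧ dist u (d i) < r := by
    intro i r x
    constructor
    · intro hx
      obtain ⟨j, hj⟩ := Set.mem_iUnion.1 hx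
      obtain ⟨p, ⟨hpK, hpd⟩, hpx⟩ := hj
      refine ⟨p.2, by rw [← hpx]; exact hpK, ?_⟩
      have : (0:ℝ) < 1 / (j + 1) := by positivity
      calc dist p.2 (d i) ≤ r - 1/(j+1) := hpd
        _ < r := by linarith
    · rintro ⟨u, huK, hud⟩
      obtain ⟨j, hj⟩ := exists_nat_one_div_lt (show (0:ℝ) < r - dist u (d i) by linarith)
      refine Set.mem_iUnion.2 ⟨j, ⟨(x, u), ⟨huK, by simp only [Set.mem_setOf_eq]; linarith⟩, rfl⟩⟩
  -- goodness predicate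
  set Good : ℕ → (E → F) → Prop :=
    fun k g => ∀ x ∈ S, ∃ u, (x, u) ∈ K ∧ dist (g x) u < (1/2)^k with hGood_def
  -- base function
  have base : ∃ g : E → F, Measurable g ∧ Good 0 g := by
    refine ⟨fun x => d (sInf {i | x ∈ Er i 1}), ?_, ?_⟩
    · exact measurable_from_top.comp (measurable_sInf_index fun i => hEr_meas i 1)
    · intro x hx
      obtain ⟨u, hu⟩ : ∃ u, (x, u) ∈ K := by
        obtain ⟨p, hpK, hpx⟩ := hx
        exact ⟨p.2, by rw [← hpx]; exact hpK⟩
      obtain ⟨i, hi⟩ := Metric.denseRange_iff.1 hd u 1 one_pos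
      have hne : {i | x ∈ Er i 1}.Nonempty :=
        ⟨i, (hEr_mem i 1 x).2 ⟨u, hu, hi⟩⟩
      have hmem := Nat.sInf_mem hne
      obtain ⟨u', hu'K, hu'd⟩ := (hEr_mem _ 1 x).1 hmem
      exact ⟨u', hu'K, by rw [dist_comm] at hu'd; simpa using hu'd⟩
  -- inductive step
  have step : ∀ (k : ℕ) (g : E → F), Measurable g → Good k g →
      ∃ g' : E → F, Measurable g' ∧ Good (k+1) g' ∧
        ∀ x ∈ S, dist (g' x) (g x) ≤ 2 * (1/2)^k := by
    intro k g hgm hgood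
    set P : ℕ → E → Prop := fun i x =>
      x ∈ Er i ((1/2)^(k+1)) ∧ dist (d i) (g x) < (1/2)^k + (1/2)^(k+1) with hP_def
    have hPmeas : ∀ i, MeasurableSet {x | P i x} := by
      intro i
      refine (hEr_meas i _).inter ?_
      have : Measurable fun x => dist (d i) (g x) :=
        (continuous_const.dist continuous_id).measurable.comp hgm
      exact this (measurableSet_Iio (a := (1/2:ℝ)^k + (1/2)^(k+1)))
    refine ⟨fun x => d (sInf {i | P i x}), ?_, ?_, ?_⟩
    · exact measurable_from_top.comp (measurable_sInf_index hPmeas)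
    · intro x hx
      obtain ⟨u, huK, hud⟩ := hgood x hx
      set δ : ℝ := min ((1/2)^(k+1)) ((1/2)^k + (1/2)^(k+1) - dist (g x) u) with hδ_def
      have hδpos : 0 < δ := by
        apply lt_min (by positivity)
        have : (0:ℝ) < (1/2)^(k+1) := by positivity
        linarith
      obtain ⟨i, hi⟩ := Metric.denseRange_iff.1 hd u δ hδpos
      have hPi : P i x := by
        constructor
        · exact (hEr_mem _ _ x).2 ⟨u, huK, lt_of_lt_of_le hi (min_le_left _ _)⟩
        · calc dist (d i) (g x) ≤ dist (d i) u + dist u (g x) := dist_triangle _ _ _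
            _ < δ + dist u (g x) := by rw [dist_comm u (d i)] at hi; linarith
            _ ≤ ((1/2)^k + (1/2)^(k+1) - dist (g x) u) + dist u (g x) := by
                have := min_le_right ((1/2:ℝ)^(k+1)) ((1/2)^k + (1/2)^(k+1) - dist (g x) u)
                linarith [this]
            _ = (1/2)^k + (1/2)^(k+1) := by rw [dist_comm u (g x)]; ring
      have hne : {i | P i x}.Nonempty := ⟨i, hPi⟩
      have hmem : P (sInf {i | P i x}) x := Nat.sInf_mem hne
      obtain ⟨u', hu'K, hu'd⟩ := (hEr_mem _ _ x).1 hmem.1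
      exact ⟨u', hu'K, by rw [dist_comm] at hu'd; simpa using hu'd⟩
    · intro x hx
      obtain ⟨u, huK, hud⟩ := hgood x hx
      set δ : ℝ := min ((1/2)^(k+1)) ((1/2)^k + (1/2)^(k+1) - dist (g x) u) with hδ_def
      have hδpos : 0 < δ := by
        apply lt_min (by positivity)
        have : (0:ℝ) < (1/2)^(k+1) := by positivity
        linarith
      obtain ⟨i, hi⟩ := Metric.denseRange_iff.1 hd u δ hδpos
      have hPi : P i x := by
        constructor
        · exact (hEr_mem _ _ x).2 ⟨u, huK, lt_of_lt_of_le hi (min_le_left _ _)⟩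
        · calc dist (d i) (g x) ≤ dist (d i) u + dist u (g x) := dist_triangle _ _ _
            _ < δ + dist u (g x) := by rw [dist_comm u (d i)] at hi; linarith
            _ ≤ ((1/2)^k + (1/2)^(k+1) - dist (g x) u) + dist u (g x) := by
                have := min_le_right ((1/2:ℝ)^(k+1)) ((1/2)^k + (1/2)^(k+1) - dist (g x) u)
                linarith [this]
            _ = (1/2)^k + (1/2)^(k+1) := by rw [dist_comm u (g x)]; ring
      have hne : {i | P i x}.Nonempty := ⟨i, hPi⟩
      have hmem : P (sInf {i | P i x}) x := Nat.sInf_mem hne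
      have : dist (d (sInf {i | P i x})) (g x) < (1/2)^k + (1/2)^(k+1) := hmem.2
      have h2 : (1/2:ℝ)^k + (1/2)^(k+1) ≤ 2 * (1/2)^k := by
        have : (1/2:ℝ)^(k+1) ≤ (1/2)^k := by
          apply pow_le_pow_of_le_one (by norm_num) (by norm_num)
          omega
        linarith
      exact le_trans (le_of_lt this) h2
  -- build the chain
  obtain ⟨g0, hg0m, hg0⟩ := base
  let T : ℕ → Type _ := fun k => {g : E → F // Measurable g ∧ Good k g}
  let Gs : ∀ k, T k := fun k => Nat.rec
    (⟨g0, hg0m, hg0⟩ : T 0)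
    (fun k ih => ⟨(step k ih.1 ih.2.1 ih.2.2).choose,
      (step k ih.1 ih.2.1 ih.2.2).choose_spec.1,
      (step k ih.1 ih.2.1 ih.2.2).choose_spec.2.1⟩) k
  set G : ℕ → E → F := fun k => (Gs k).1 with hG_def
  have hGm : ∀ k, Measurable (G k) := fun k => (Gs k).2.1
  have hGgood : ∀ k, Good k (G k) := fun k => (Gs k).2.2
  have hGclose : ∀ k, ∀ x ∈ S, dist (G (k+1) x) (G k x) ≤ 2 * (1/2)^k := by
    intro k
    have hrec : G (k+1) = (step k (G k) (hGm k) (hGgood k)).choose := rfl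
    rw [hrec]
    exact (step k (G k) (hGm k) (hGgood k)).choose_spec.2.2
  -- piecewise modification
  set H : ℕ → E → F := fun k => S.piecewise (G k) (fun _ => d 0) with hH_def
  have hHm : ∀ k, Measurable (H k) := fun k => Measurable.piecewise hSmeas (hGm k) measurable_const
  have hHS : ∀ k, ∀ x ∈ S, H k x = G k x := fun k x hx => Set.piecewise_eq_of_mem _ _ _ hx
  have hHclose : ∀ x k, dist (H k x) (H (k+1) x) ≤ 2 * (1/2)^k := by
    intro x k
    by_cases hx : x ∈ S
    · rw [hHS k x hx, hHS (k+1) x hx, dist_comm]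
      exact hGclose k x hx
    · have h1 : H k x = d 0 := Set.piecewise_eq_of_notMem _ _ _ hx
      have h2 : H (k+1) x = d 0 := Set.piecewise_eq_of_notMem _ _ _ hx
      rw [h1, h2, dist_self]
      positivity
  have hHcauchy : ∀ x, CauchySeq fun k => H k x := by
    intro x
    exact cauchySeq_of_le_geometric (1/2) 2 (by norm_num) (fun k => hHclose x k)
  have hconv : ∀ x, ∃ l, Tendsto (fun k => H k x) atTop (𝓝 l) :=
    fun x => cauchySeq_tendsto_of_complete (hHcauchy x)
  set g : E → F := fun x => (hconv x).choose with hg_def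
  have htend : ∀ x, Tendsto (fun k => H k x) atTop (𝓝 (g x)) := fun x => (hconv x).choose_spec
  have hgm : Measurable g :=
    measurable_of_tendsto_metrizable hHm (tendsto_pi_nhds.2 htend)
  refine ⟨g, hgm, ?_⟩
  intro x hx
  -- find approximating points in the fibers
  have husel : ∀ k, ∃ u, (x, u) ∈ K ∧ dist (G k x) u < (1/2)^k := fun k => hGgood k x hx
  choose u hu1 hu2 using husel
  have hutend : Tendsto (fun k => u k) atTop (𝓝 (g x)) := by
    rw [tendsto_iff_dist_tendsto_zero]
    have hb : ∀ k, dist (u k) (g x) ≤ (1/2)^k + dist (G k x) (g x) := by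
      intro k
      calc dist (u k) (g x) ≤ dist (u k) (G k x) + dist (G k x) (g x) := dist_triangle _ _ _
        _ ≤ (1/2)^k + dist (G k x) (g x) := by
            rw [dist_comm]
            exact add_le_add (le_of_lt (hu2 k)) (le_refl _)
    have hGtend : Tendsto (fun k => dist (G k x) (g x)) atTop (𝓝 0) := by
      have : Tendsto (fun k => G k x) atTop (𝓝 (g x)) := by
        have := htend x
        refine this.congr fun k => hHS k x hx
      exact tendsto_iff_dist_tendsto_zero.1 this
    have hpow : Tendsto (fun k : ℕ => (1/2:ℝ)^k) atTop (𝓝 0) :=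
      tendsto_pow_atTop_nhds_zero_of_lt_one (by norm_num) (by norm_num)
    have hsum : Tendsto (fun k => (1/2:ℝ)^k + dist (G k x) (g x)) atTop (𝓝 0) := by
      have := hpow.add hGtend
      simpa using this
    exact squeeze_zero (fun k => dist_nonneg) hb hsum
  have hptend : Tendsto (fun k => ((x, u k) : E × F)) atTop (𝓝 (x, g x)) :=
    Tendsto.prodMk_nhds tendsto_const_nhds hutend
  exact hK.isClosed.mem_of_tendsto hptend (Filter.Eventually.of_forall fun k => hu1 k)

end Selection

section MCI

variable {n m : ℕ} {X : Set (EuclideanSpace ℝ (Fin n))} {U : Set (EuclideanSpace ℝ (Fin m))}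
  {f : EuclideanSpace ℝ (Fin n) → EuclideanSpace ℝ (Fin m) → EuclideanSpace ℝ (Fin n)}

lemma mciD_subset_X : mciD X U f ⊆ X := by
  rintro x0 ⟨x, u, h0, _, hX, _⟩
  rw [← h0]; exact hX 0

lemma mciD_step {x0 : EuclideanSpace ℝ (Fin n)} (hx0 : x0 ∈ mciD X U f) :
    ∃ u0 ∈ U, f x0 u0 ∈ mciD X U f := by
  obtain ⟨x, u, h0, hstep, hX, hU⟩ := hx0
  refine ⟨u 0, hU 0, ?_⟩
  refine ⟨fun t => x (t + 1), fun t => u (t + 1), ?_, fun t => hstep (t+1), fun t => hX (t+1),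
    fun t => hU (t+1)⟩
  show x (0 + 1) = f x0 (u 0)
  rw [hstep 0, h0]

lemma isCompact_mciD (hX : IsCompact X) (hU : IsCompact U)
    (hf : Continuous fun p : EuclideanSpace ℝ (Fin n) × EuclideanSpace ℝ (Fin m) => f p.1 p.2) :
    IsCompact (mciD X U f) := by
  set T : Set ((ℕ → EuclideanSpace ℝ (Fin n)) × (ℕ → EuclideanSpace ℝ (Fin m))) :=
    {p | (∀ t, p.1 (t + 1) = f (p.1 t) (p.2 t)) ∧ (∀ t, p.1 t ∈ X) ∧ (∀ t, p.2 t ∈ U)} with hT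
  have hTsub : T ⊆ (Set.univ.pi fun _ => X) ×ˢ (Set.univ.pi fun _ => U) := by
    rintro p ⟨_, h2, h3⟩
    exact ⟨fun t _ => h2 t, fun t _ => h3 t⟩
  have hTclosed : IsClosed T := by
    have h1 : IsClosed {p : (ℕ → EuclideanSpace ℝ (Fin n)) × (ℕ → EuclideanSpace ℝ (Fin m)) |
        ∀ t, p.1 (t + 1) = f (p.1 t) (p.2 t)} := by
      rw [Set.setOf_forall]
      refine isClosed_iInter fun t => isClosed_eq ((continuous_apply (t+1)).comp continuous_fst)
        (Continuous.comp (f := fun p : (ℕ → EuclideanSpace ℝ (Fin n)) ×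
            (ℕ → EuclideanSpace ℝ (Fin m)) => (p.1 t, p.2 t)) hf
          ((((continuous_apply t).comp continuous_fst)).prodMk
            ((continuous_apply t).comp continuous_snd)))
    have h2 : IsClosed {p : (ℕ → EuclideanSpace ℝ (Fin n)) × (ℕ → EuclideanSpace ℝ (Fin m)) |
        ∀ t, p.1 t ∈ X} := by
      rw [Set.setOf_forall]
      exact isClosed_iInter fun t =>
        hX.isClosed.preimage ((continuous_apply t).comp continuous_fst)
    have h3 : IsClosed {p : (ℕ → EuclideanSpace ℝ (Fin n)) × (ℕ → EuclideanSpace ℝ (Fin m)) |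
        ∀ t, p.2 t ∈ U} := by
      rw [Set.setOf_forall]
      exact isClosed_iInter fun t =>
        hU.isClosed.preimage ((continuous_apply t).comp continuous_snd)
    exact h1.inter (h2.inter h3)
  have hTcompact : IsCompact T :=
    IsCompact.of_isClosed_subset
      ((isCompact_univ_pi fun _ => hX).prod (isCompact_univ_pi fun _ => hU)) hTclosed hTsub
  have himg : mciD X U f = (fun p : (ℕ → EuclideanSpace ℝ (Fin n)) ×
      (ℕ → EuclideanSpace ℝ (Fin m)) => p.1 0) '' T := by
    ext x0
    constructor
    · rintro ⟨x, u, h0, hstep, hXm, hUm⟩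
      exact ⟨(x, u), ⟨hstep, hXm, hUm⟩, h0⟩
    · rintro ⟨p, ⟨hstep, hXm, hUm⟩, h0⟩
      exact ⟨p.1, p.2, h0, hstep, hXm, hUm⟩
  rw [himg]
  exact hTcompact.image ((continuous_apply 0).comp continuous_fst)

end MCI

open MeasureTheory Metric Filter
open scoped ENNReal Topology

section Construct

variable {n m : ℕ} {X : Set (EuclideanSpace ℝ (Fin n))} {U : Set (EuclideanSpace ℝ (Fin m))}
  {f : EuclideanSpace ℝ (Fin n) → EuclideanSpace ℝ (Fin m) → EuclideanSpace ℝ (Fin n)}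
  {α : ℝ}

/-- The optimal primal solution: existence of `μ, μh` making `λ|_{X_I}` feasible. -/
lemma exists_feasible_mci (hX : IsCompact X) (hU : IsCompact U)
    (hf : Continuous fun p : EuclideanSpace ℝ (Fin n) × EuclideanSpace ℝ (Fin m) => f p.1 p.2)
    (hα0 : 0 < α) (hα1 : α < 1) :
    ∃ μ μh, (IsFiniteMeasure (volume.restrict (mciD X U f)) ∧ IsFiniteMeasure μ ∧
      IsFiniteMeasure μh ∧
      msupport (volume.restrict (mciD X U f)) ⊆ X ∧ msupport μh ⊆ X ∧
      msupport μ ⊆ X ×ˢ U ∧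
      (∀ v : EuclideanSpace ℝ (Fin n) → ℝ, Continuous v →
        ∫ p, v p.1 ∂μ = (∫ x, v x ∂(volume.restrict (mciD X U f))) +
          α * ∫ p, v (f p.1 p.2) ∂μ) ∧
      volume.restrict (mciD X U f) + μh = volume.restrict X) := by
  classical
  set XI := mciD X U f with hXI_def
  have hXIc : IsCompact XI := isCompact_mciD hX hU hf
  have hXIm : MeasurableSet XI := hXIc.isClosed.measurableSet
  have hXIX : XI ⊆ X := mciD_subset_X
  set K : Set (EuclideanSpace ℝ (Fin n) × EuclideanSpace ℝ (Fin m)) :=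
    (XI ×ˢ U) ∩ {p | f p.1 p.2 ∈ XI} with hK_def
  have hKc : IsCompact K := (hXIc.prod hU).inter_right (hXIc.isClosed.preimage hf)
  have hKXU : K ⊆ X ×ˢ U := fun p hp => ⟨hXIX hp.1.1, hp.1.2⟩
  obtain ⟨g, hgm, hgsel⟩ := exists_measurable_selection hKc
  have hgK : ∀ x ∈ XI, (x, g x) ∈ K := by
    intro x hx
    obtain ⟨u, hu, hfu⟩ := mciD_step hx
    exact hgsel x ⟨(x, u), ⟨⟨hx, hu⟩, hfu⟩, rfl⟩
  set F1 : EuclideanSpace ℝ (Fin n) → EuclideanSpace ℝ (Fin n) := fun x => f x (g x)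
    with hF1_def
  have hF1m : Measurable F1 := hf.measurable.comp (measurable_id.prodMk hgm)
  have hinv : ∀ x ∈ XI, ∀ t, F1^[t] x ∈ XI := by
    intro x hx t
    induction t with
    | zero => simpa using hx
    | succ t ih =>
      rw [Function.iterate_succ_apply']
      exact (hgK _ ih).2
  set Φ : ℕ → EuclideanSpace ℝ (Fin n) → EuclideanSpace ℝ (Fin n) × EuclideanSpace ℝ (Fin m) :=
    fun t x => (F1^[t] x, g (F1^[t] x)) with hΦ_def
  have hΦm : ∀ t, Measurable (Φ t) := fun t => (hF1m.iterate t).prodMk (hgm.comp (hF1m.iterate t))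
  have hΦK : ∀ x ∈ XI, ∀ t, Φ t x ∈ K := fun x hx t => hgK _ (hinv x hx t)
  set ν : Measure (EuclideanSpace ℝ (Fin n)) := volume.restrict XI with hν_def
  have hXIfin : volume XI < ⊤ := lt_of_le_of_lt (measure_mono hXIX) hX.measure_lt_top
  haveI hνf : IsFiniteMeasure ν :=
    ⟨by rw [Measure.restrict_apply_univ]; exact hXIfin⟩
  set c : ℕ → ℝ≥0∞ := fun t => ENNReal.ofReal (α ^ t) with hc_def
  have hc_pow : ∀ t, c t = (ENNReal.ofReal α) ^ t := fun t => ENNReal.ofReal_pow hα0.le t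
  have hcsum : ∑' t, c t ≠ ⊤ := by
    simp only [hc_pow]
    rw [ENNReal.tsum_geometric]
    refine ENNReal.inv_ne_top.2 ?_
    rw [Ne, tsub_eq_zero_iff_le, not_le]
    exact ENNReal.ofReal_lt_one.2 hα1
  set μ : Measure (EuclideanSpace ℝ (Fin n) × EuclideanSpace ℝ (Fin m)) :=
    Measure.sum (fun t => c t • (ν.map (Φ t))) with hμ_def
  have hμ_apply : ∀ {s : Set (EuclideanSpace ℝ (Fin n) × EuclideanSpace ℝ (Fin m))},
      MeasurableSet s → μ s = ∑' t, c t * ν (Φ t ⁻¹' s) := by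
    intro s hs
    rw [hμ_def, Measure.sum_apply _ hs]
    congr 1
    ext t
    rw [Measure.smul_apply, Measure.map_apply (hΦm t) hs, smul_eq_mul]
  have hμKc : μ Kᶜ = 0 := by
    rw [hμ_apply hKc.isClosed.measurableSet.compl]
    have : ∀ t, ν (Φ t ⁻¹' Kᶜ) = 0 := by
      intro t
      rw [hν_def, Measure.restrict_apply ((hΦm t) hKc.isClosed.measurableSet.compl)]
      have hempty : Φ t ⁻¹' Kᶜ ∩ XI = ∅ := by
        ext x
        simp only [Set.mem_inter_iff, Set.mem_preimage, Set.mem_compl_iff,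
          Set.mem_empty_iff_false, iff_false, not_and]
        intro hnot hx
        exact absurd (hΦK x hx t) hnot
      rw [hempty, measure_empty]
    simp only [this, mul_zero, tsum_zero]
  have hμ_ae : ∀ᵐ p ∂μ, p ∈ K := by
    rw [MeasureTheory.ae_iff]
    exact measure_mono_null (fun p hp => by simpa using hp) hμKc
  haveI hμf : IsFiniteMeasure μ := by
    refine ⟨?_⟩
    rw [hμ_apply MeasurableSet.univ]
    simp only [Set.preimage_univ]
    rw [ENNReal.tsum_mul_right]
    exact ENNReal.mul_lt_top hcsum.lt_top (measure_lt_top ν _)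
  -- the key integral computation
  have key : ∀ (w : EuclideanSpace ℝ (Fin n) × EuclideanSpace ℝ (Fin m) → ℝ) (M : ℝ),
      Continuous w → (∀ p ∈ K, ‖w p‖ ≤ M) →
      ∫ p, w p ∂μ = ∑' t, α ^ t * ∫ x, w (Φ t x) ∂ν := by
    intro w M hw hwM
    have hint : Integrable w μ := by
      refine ⟨hw.aestronglyMeasurable, HasFiniteIntegral.of_bounded (C := M) ?_⟩
      filter_upwards [hμ_ae] with p hp using hwM p hp
    rw [integral_sum_measure hint]
    congr 1
    ext t
    rw [integral_smul_measure, integral_map (hΦm t).aemeasurable hw.aestronglyMeasurable]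
    simp only [hc_def, ENNReal.toReal_ofReal (pow_nonneg hα0.le t), smul_eq_mul]
  -- Liouville equation
  have hLiou : ∀ v : EuclideanSpace ℝ (Fin n) → ℝ, Continuous v →
      ∫ p, v p.1 ∂μ = (∫ x, v x ∂ν) + α * ∫ p, v (f p.1 p.2) ∂μ := by
    intro v hv
    obtain ⟨C, hC⟩ := hX.exists_bound_of_continuousOn hv.continuousOn
    set M : ℝ := max C 0 with hM_def
    have hCM : ∀ y ∈ X, ‖v y‖ ≤ M := fun y hy => le_trans (hC y hy) (le_max_left _ _)
    set I : ℕ → ℝ := fun t => ∫ x, v (F1^[t] x) ∂ν with hI_def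
    have hIb : ∀ t, ‖I t‖ ≤ M * (volume XI).toReal := by
      intro t
      refine norm_setIntegral_le_of_norm_le_const hXIfin ?_
      · exact fun x hx => hCM _ (hXIX (hinv x hx t))
    have hsum1 : Summable fun t => α ^ t * I t := by
      refine Summable.of_norm_bounded
        ((summable_geometric_of_lt_one hα0.le hα1).mul_left (M * (volume XI).toReal)) ?_
      intro t
      calc ‖α ^ t * I t‖ = α ^ t * ‖I t‖ := by
            rw [norm_mul, Real.norm_of_nonneg (pow_nonneg hα0.le t)]
        _ ≤ α ^ t * (M * (volume XI).toReal) :=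
            mul_le_mul_of_nonneg_left (hIb t) (pow_nonneg hα0.le t)
        _ = (M * (volume XI).toReal) * α ^ t := mul_comm _ _
    have e1 : ∫ p, v p.1 ∂μ = ∑' t, α ^ t * I t := by
      refine key (fun p => v p.1) M (hv.comp continuous_fst) ?_
      exact fun p hp => hCM _ (hXIX hp.1.1)
    have e2 : ∫ p, v (f p.1 p.2) ∂μ = ∑' t, α ^ t * I (t + 1) := by
      have := key (fun p => v (f p.1 p.2)) M (hv.comp hf) (fun p hp => hCM _ (hXIX hp.2))
      rw [this]
      congr 1
      ext t
      congr 1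
      refine integral_congr_ae (Filter.Eventually.of_forall fun x => ?_)
      show v (f (F1^[t] x) (g (F1^[t] x))) = v (F1^[t+1] x)
      rw [Function.iterate_succ_apply']
    have e3 : ∫ x, v x ∂ν = I 0 := by
      simp only [hI_def, Function.iterate_zero, id_eq]
    rw [e1, e2, e3]
    rw [hsum1.tsum_eq_zero_add]
    have : ∀ t : ℕ, α ^ (t+1) * I (t+1) = α * (α ^ t * I (t+1)) := fun t => by ring
    simp only [pow_zero, one_mul, this]
    rw [tsum_mul_left]
  -- supports
  have hsuppν : msupport ν ⊆ X := by
    refine msupport_subset hX.isClosed ?_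
    rw [hν_def, Measure.restrict_apply hX.isClosed.measurableSet.compl]
    have : Xᶜ ∩ XI = ∅ := by
      ext x
      simp only [Set.mem_inter_iff, Set.mem_compl_iff, Set.mem_empty_iff_false, iff_false,
        not_and]
      exact fun hnx hx => absurd (hXIX hx) hnx
    rw [this, measure_empty]
  have hsuppμ : msupport μ ⊆ X ×ˢ U :=
    msupport_subset (hX.prod hU).isClosed
      (measure_mono_null (Set.compl_subset_compl.2 hKXU) hμKc)
  -- the complementary measure
  set μh : Measure (EuclideanSpace ℝ (Fin n)) := volume.restrict (X \ XI) with hμh_def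
  haveI hμhf : IsFiniteMeasure μh :=
    ⟨by rw [Measure.restrict_apply_univ]
        exact lt_of_le_of_lt (measure_mono Set.diff_subset) hX.measure_lt_top⟩
  have hsuppμh : msupport μh ⊆ X := by
    refine msupport_subset hX.isClosed ?_
    rw [hμh_def, Measure.restrict_apply hX.isClosed.measurableSet.compl]
    have : Xᶜ ∩ (X \ XI) = ∅ := by
      ext x
      simp only [Set.mem_inter_iff, Set.mem_compl_iff, Set.mem_diff, Set.mem_empty_iff_false,
        iff_false, not_and]
      tauto
    rw [this, measure_empty]
  have hadd : ν + μh = volume.restrict X := by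
    rw [hν_def, hμh_def, ← Measure.restrict_union Set.disjoint_sdiff_right
      (hX.isClosed.measurableSet.diff hXIm), Set.union_diff_cancel hXIX]
  exact ⟨μ, μh, hνf, hμf, hμhf, hsuppν, hsuppμh, hsuppμ, hLiou, hadd⟩

end Construct

section Upper

open MeasureTheory Metric Filter
open scoped ENNReal Topology

variable {n m : ℕ} {X : Set (EuclideanSpace ℝ (Fin n))} {U : Set (EuclideanSpace ℝ (Fin m))}
  {f : EuclideanSpace ℝ (Fin n) → EuclideanSpace ℝ (Fin m) → EuclideanSpace ℝ (Fin n)}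
  {α : ℝ}

lemma mass_le_mci (hX : IsCompact X) (hU : IsCompact U)
    (hf : Continuous fun p : EuclideanSpace ℝ (Fin n) × EuclideanSpace ℝ (Fin m) => f p.1 p.2)
    (hα0 : 0 < α) (hα1 : α < 1)
    (μ₀ : Measure (EuclideanSpace ℝ (Fin n)))
    (μ : Measure (EuclideanSpace ℝ (Fin n) × EuclideanSpace ℝ (Fin m)))
    (μh : Measure (EuclideanSpace ℝ (Fin n)))
    (hfin0 : IsFiniteMeasure μ₀) (hfinμ : IsFiniteMeasure μ) (hfinh : IsFiniteMeasure μh)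
    (hs0 : msupport μ₀ ⊆ X) (hsμ : msupport μ ⊆ X ×ˢ U)
    (hL : ∀ v : EuclideanSpace ℝ (Fin n) → ℝ, Continuous v →
      ∫ p, v p.1 ∂μ = ∫ x, v x ∂μ₀ + α * ∫ p, v (f p.1 p.2) ∂μ)
    (hsum : μ₀ + μh = volume.restrict X) :
    μ₀ X ≤ volume (mciD X U f) := by
  classical
  haveI := hfin0; haveI := hfinμ; haveI := hfinh
  set XI := mciD X U f with hXI_def
  set A : Measure (EuclideanSpace ℝ (Fin n)) := μ.map Prod.fst with hA_def
  set B : Measure (EuclideanSpace ℝ (Fin n)) := μ.map (fun p => f p.1 p.2) with hB_def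
  haveI hAf : IsFiniteMeasure A := by rw [hA_def]; infer_instance
  haveI hBf : IsFiniteMeasure B := by rw [hB_def]; infer_instance
  have hAint : ∀ v : EuclideanSpace ℝ (Fin n) → ℝ, Continuous v →
      ∫ x, v x ∂A = ∫ p, v p.1 ∂μ := fun v hv =>
    integral_map measurable_fst.aemeasurable hv.aestronglyMeasurable
  have hBint : ∀ v : EuclideanSpace ℝ (Fin n) → ℝ, Continuous v →
      ∫ x, v x ∂B = ∫ p, v (f p.1 p.2) ∂μ := fun v hv =>
    integral_map hf.measurable.aemeasurable hv.aestronglyMeasurable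
  have hAopen : ∀ s : Set (EuclideanSpace ℝ (Fin n)), IsOpen s → μ₀ s ≤ A s := by
    intro s hs
    refine measure_le_measure_of_integral_le ?_ hs
    intro v hv h0 h1
    have hL' := hL v hv
    have hnn : 0 ≤ ∫ p, v (f p.1 p.2) ∂μ := integral_nonneg fun p => h0 _
    rw [hAint v hv]
    nlinarith [mul_nonneg hα0.le hnn]
  have hBopen : ∀ s : Set (EuclideanSpace ℝ (Fin n)), IsOpen s →
      ENNReal.ofReal α * B s ≤ A s := by
    intro s hs
    haveI : IsFiniteMeasure (ENNReal.ofReal α • B) :=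
      ⟨by rw [Measure.smul_apply, smul_eq_mul]
          exact ENNReal.mul_lt_top ENNReal.ofReal_lt_top (measure_lt_top B _)⟩
    have h := measure_le_measure_of_integral_le (ν₁ := ENNReal.ofReal α • B) (ν₂ := A) ?_ hs
    · rw [Measure.smul_apply, smul_eq_mul] at h
      exact h
    intro v hv h0 h1
    rw [integral_smul_measure, ENNReal.toReal_ofReal hα0.le, smul_eq_mul,
      hAint v hv, hBint v hv]
    have hL' := hL v hv
    have hnn : 0 ≤ ∫ x, v x ∂μ₀ := integral_nonneg fun x => h0 _
    linarith
  set S0 := msupport μ₀ with hS0_def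
  set SA := msupport A with hSA_def
  set K0 := msupport μ with hK0_def
  have hK0c : IsCompact K0 :=
    IsCompact.of_isClosed_subset (hX.prod hU) (isClosed_msupport μ) hsμ
  set P := Prod.fst '' K0 with hP_def
  have hPc : IsCompact P := hK0c.image continuous_fst
  have hSA_P : SA ⊆ P := by
    intro x hx
    by_contra hxP
    have hsopen : IsOpen Pᶜ := hPc.isClosed.isOpen_compl
    have hApos : 0 < A Pᶜ := hx Pᶜ hsopen hxP
    have hA0 : A Pᶜ = 0 := by
      rw [hA_def, Measure.map_apply measurable_fst hPc.isClosed.measurableSet.compl]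
      refine measure_mono_null ?_ (measure_compl_msupport μ)
      intro p hp hpK0
      exact hp ⟨p, hpK0, rfl⟩
    rw [hA0] at hApos
    exact lt_irrefl _ hApos
  have hstep : ∀ x ∈ SA, x ∈ X ∧ ∃ u ∈ U, f x u ∈ SA := by
    intro x hx
    obtain ⟨p, hpK0, hpx⟩ := hSA_P hx
    have hpXU : p ∈ X ×ˢ U := hsμ hpK0
    refine ⟨by rw [← hpx]; exact hpXU.1, p.2, hpXU.2, ?_⟩
    intro s hs hfs
    have hBs : 0 < B s := by
      rw [hB_def, Measure.map_apply hf.measurable hs.measurableSet]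
      refine hpK0 _ (hs.preimage hf) ?_
      show f p.1 p.2 ∈ s
      rw [hpx]; exact hfs
    calc (0:ℝ≥0∞) < ENNReal.ofReal α * B s :=
          ENNReal.mul_pos (ne_of_gt (ENNReal.ofReal_pos.2 hα0)) (ne_of_gt hBs)
      _ ≤ A s := hBopen s hs
  have hSA_XI : SA ⊆ XI := by
    intro x0 hx0
    have hch : ∀ x, x ∈ SA → ∃ u, u ∈ U ∧ f x u ∈ SA := by
      intro x hx
      obtain ⟨-, u, hu, hfu⟩ := hstep x hx
      exact ⟨u, hu, hfu⟩
    set χ : EuclideanSpace ℝ (Fin n) → EuclideanSpace ℝ (Fin m) :=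
      fun x => if h : x ∈ SA then (hch x h).choose else 0 with hχ_def
    set Fχ : EuclideanSpace ℝ (Fin n) → EuclideanSpace ℝ (Fin n) := fun x => f x (χ x)
      with hFχ_def
    have hkeep : ∀ x, x ∈ SA → χ x ∈ U ∧ f x (χ x) ∈ SA := by
      intro x hx
      have hχx : χ x = (hch x hx).choose := by rw [hχ_def]; exact dif_pos hx
      rw [hχx]
      exact (hch x hx).choose_spec
    have hseq : ∀ t, Fχ^[t] x0 ∈ SA := by
      intro t
      induction t with
      | zero => simpa using hx0
      | succ t ih =>
        rw [Function.iterate_succ_apply']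
        exact (hkeep _ ih).2
    refine ⟨fun t => Fχ^[t] x0, fun t => χ (Fχ^[t] x0), rfl, ?_, ?_, ?_⟩
    · intro t
      show Fχ^[t+1] x0 = f (Fχ^[t] x0) (χ (Fχ^[t] x0))
      rw [Function.iterate_succ_apply']
    · intro t
      exact (hstep _ (hseq t)).1
    · intro t
      exact (hkeep _ (hseq t)).1
  have hS0SA : S0 ⊆ SA := fun x hx s hs hxs => lt_of_lt_of_le (hx s hs hxs) (hAopen s hs)
  have h1 : μ₀ XIᶜ = 0 :=
    measure_mono_null (Set.compl_subset_compl.2 (hS0SA.trans hSA_XI))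
      (measure_compl_msupport μ₀)
  calc μ₀ X ≤ μ₀ (XI ∪ XIᶜ) := measure_mono (by simp)
    _ ≤ μ₀ XI + μ₀ XIᶜ := measure_union_le _ _
    _ = μ₀ XI := by rw [h1, add_zero]
    _ ≤ μ₀ XI + μh XI := le_self_add
    _ = (μ₀ + μh) XI := (Measure.add_apply _ _ _).symm
    _ = (volume.restrict X) XI := by rw [hsum]
    _ = volume XI := by
        rw [Measure.restrict_apply' hX.isClosed.measurableSet,
          Set.inter_eq_self_of_subset_left mciD_subset_X]

end Upper

theorem discrete_primal_value_eq_volume_MCI {n m : ℕ}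
    (X : Set (EuclideanSpace ℝ (Fin n))) (U : Set (EuclideanSpace ℝ (Fin m)))
    (hX : IsCompact X) (hU : IsCompact U)
    (f : EuclideanSpace ℝ (Fin n) → EuclideanSpace ℝ (Fin m) → EuclideanSpace ℝ (Fin n))
    (hf : Continuous fun p : EuclideanSpace ℝ (Fin n) × EuclideanSpace ℝ (Fin m) => f p.1 p.2)
    (α : ℝ) (hα0 : 0 < α) (hα1 : α < 1) :
    sSup {r : ℝ≥0∞ | ∃ μ₀ μ μh, FeasibleD X U f α μ₀ μ μh ∧ r = μ₀ X}
      = volume (mciD X U f) ∧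
    ∃ μ μh, FeasibleD X U f α (volume.restrict (mciD X U f)) μ μh := by
  obtain ⟨μs, μhs, hfeas'⟩ := exists_feasible_mci hX hU hf hα0 hα1
  have hfeas : FeasibleD X U f α (volume.restrict (mciD X U f)) μs μhs := hfeas'
  constructor
  · apply le_antisymm
    · refine sSup_le ?_
      rintro r ⟨μ₀, μ, μh, hF, rfl⟩
      obtain ⟨h1, h2, h3, h4, h5, h6, h7, h8⟩ := hF
      exact mass_le_mci hX hU hf hα0 hα1 μ₀ μ μh h1 h2 h3 h4 h6 h7 h8
    · refine le_sSup ?_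
      refine ⟨volume.restrict (mciD X U f), μs, μhs, hfeas, ?_⟩
      rw [Measure.restrict_apply' (isCompact_mciD hX hU hf).isClosed.measurableSet,
        Set.inter_eq_self_of_subset_right mciD_subset_X]
  · exact ⟨μs, μhs, hfeas⟩
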